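/- Let H = ℓ²(ℕ) with canonical orthonormal basis {e_j}_{j∈ℕ}, and let K be the orthogonal projection of H onto the closed span of {e_j : j ≥ 2}. Define Φ₁ = {φ_j}_{j∈ℕ} by φ₁ = e₁, φ₂ = e₂, φ₃ = 0, φ_j = e_{j−1} for j ≥ 4, and Ψ₁ = {ψ_j}_{j∈ℕ} by ψ₁ = e₁, ψ₂ = 0, ψ₃ = e₂, ψ_j = e_{j−1} for j ≥ 4 (so Φ₁ = {e₁, e₂, 0, e₃, e₄, …} and Ψ₁ = {e₁, 0, e₂, e₃, e₄, …}). Then Φ₁ and Ψ₁ are K-frames for H, but they are not K-woven: for σ = ℕ ∖ {2}, the family {φ_j}_{j∈σ} ∪ {ψ_j}_{j∈σᶜ} is not a K-frame for H, since ∑_{j∈σ} |⟨e₂, φ_j⟩|² + ∑_{j∈σᶜ} |⟨e₂, ψ_j⟩|² = 0 while ‖K* e₂‖² = 1. -/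
import Mathlib


/- STATEMENT 13: in H = ℓ²(ℕ) (0-based canonical basis E 0, E 1, …; the paper's e_j is
E (j-1)), with K the orthogonal projection onto the closed span of {E k : k ≥ 1},
Φ₁ = {e₁, e₂, 0, e₃, e₄, …} and Ψ₁ = {e₁, 0, e₂, e₃, e₄, …} are K-frames but are not
K-woven: for σ = ℕ ∖ {2} (0-based: ℕ ∖ {1}) the weaving is not a K-frame, since the
weaving sum at e₂ = E 1 is 0 while ‖K* e₂‖² = 1. -/

local notation "⟪" x ", " y "⟫" => @inner ℂ _ _ x y

noncomputable section

abbrev H2 : Type := lp (fun _ : ℕ => ℂ) 2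

/-- The canonical orthonormal basis of ℓ²(ℕ) (0-based; the paper's `e_j` is `E (j-1)`). -/
def E (n : ℕ) : H2 := lp.single 2 n 1

/-- The closed span of {E k : k ≥ 1}, i.e. of the paper's {e_j : j ≥ 2}. -/
def S : Submodule ℂ H2 :=
  (Submodule.span ℂ (Set.range fun k : ℕ => E (k + 1))).topologicalClosure

/-- Φ₁ = {e₁, e₂, 0, e₃, e₄, …} (0-based indexing). -/
def Φ₁ (n : ℕ) : H2 :=
  if n = 0 then E 0 else if n = 1 then E 1 else if n = 2 then 0 else E (n - 1)

/-- Ψ₁ = {e₁, 0, e₂, e₃, e₄, …} (0-based indexing). -/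
def Ψ₁ (n : ℕ) : H2 :=
  if n = 0 then E 0 else if n = 1 then 0 else if n = 2 then E 1 else E (n - 1)

/-- σ = ℕ ∖ {2} in the paper's 1-based indexing, i.e. ℕ ∖ {1} in 0-based indexing. -/
def σ₀ : Set ℕ := {n | n ≠ 1}

/-- `φ` is a `K`-frame with lower bound `A` and upper bound `B`. -/
def IsKFrameWith (K : H2 →L[ℂ] H2) (φ : ℕ → H2) (A B : ℝ) : Prop :=
  0 < A ∧ 0 < B ∧ ∀ f : H2,
    Summable (fun j : ℕ => ‖⟪f, φ j⟫‖ ^ 2) ∧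
    A * ‖ContinuousLinearMap.adjoint K f‖ ^ 2 ≤ ∑' j : ℕ, ‖⟪f, φ j⟫‖ ^ 2 ∧
    ∑' j : ℕ, ‖⟪f, φ j⟫‖ ^ 2 ≤ B * ‖f‖ ^ 2


lemma E_apply (m n : ℕ) : (E m : H2) n = if n = m then 1 else 0 := by
  rcases eq_or_ne n m with h | h
  · subst h; rw [if_pos rfl]; exact lp.single_apply_self 2 n 1
  · rw [if_neg h]; exact lp.single_apply_ne 2 m 1 h

lemma inner_E (f : H2) (n : ℕ) : ⟪f, E n⟫ = (starRingEnd ℂ) (f n) := by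
  rw [E, lp.inner_single_right]
  simp [RCLike.inner_apply]

lemma inner_E_E {m n : ℕ} (h : m ≠ n) : ⟪E m, E n⟫ = 0 := by
  rw [inner_E, E_apply]
  simp [Ne.symm h]

lemma E_hasSum (f : H2) : HasSum (fun n : ℕ => ‖⟪f, E n⟫‖ ^ 2) (‖f‖ ^ 2) := by
  have h := lp.hasSum_norm (p := 2) (by norm_num) f
  have h2 : ((2 : ENNReal)).toReal = (2 : ℝ) := by norm_num
  rw [h2] at h
  have key : ∀ n, ‖⟪f, E n⟫‖ ^ 2 = ‖f n‖ ^ (2 : ℝ) := by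
    intro n
    rw [inner_E, RCLike.norm_conj, Real.rpow_two]
  have key2 : ‖f‖ ^ 2 = ‖f‖ ^ (2 : ℝ) := (Real.rpow_two _).symm
  rw [key2]
  simpa only [key] using h

lemma Phi_hasSum (f : H2) : HasSum (fun n : ℕ => ‖⟪f, Φ₁ n⟫‖ ^ 2) (‖f‖ ^ 2) := by
  have hg : Function.Injective (fun n : ℕ => if n < 2 then n else n + 1) := by
    intro a b h
    simp only at h
    split_ifs at h <;> omega
  rw [← hg.hasSum_iff]
  · have : ((fun n : ℕ => ‖⟪f, Φ₁ n⟫‖ ^ 2) ∘ fun n : ℕ => if n < 2 then n else n + 1)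
        = fun n : ℕ => ‖⟪f, E n⟫‖ ^ 2 := by
      funext n
      rcases Nat.lt_or_ge n 2 with h | h
      · interval_cases n <;> simp [Φ₁]
      · have h1 : ¬ n < 2 := by omega
        have h2 : n + 1 ≠ 0 := by omega
        have h3 : n + 1 ≠ 1 := by omega
        have h4 : n + 1 ≠ 2 := by omega
        simp only [Function.comp_apply, if_neg h1, Φ₁, if_neg h2, if_neg h3, if_neg h4,
          Nat.add_sub_cancel]
    rw [this]
    exact E_hasSum f
  · intro x hx
    have hx2 : x = 2 := by
      by_contra h
      apply hx
      rcases Nat.lt_or_ge x 2 with h1 | h1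
      · exact ⟨x, by simp [h1]⟩
      · exact ⟨x - 1, by simp only; rw [if_neg (by omega)]; omega⟩
    subst hx2
    simp [Φ₁]

lemma Psi_hasSum (f : H2) : HasSum (fun n : ℕ => ‖⟪f, Ψ₁ n⟫‖ ^ 2) (‖f‖ ^ 2) := by
  have hg : Function.Injective (fun n : ℕ => if n = 0 then 0 else if n = 1 then 2 else n + 1) := by
    intro a b h
    simp only at h
    split_ifs at h <;> omega
  rw [← hg.hasSum_iff]
  · have : ((fun n : ℕ => ‖⟪f, Ψ₁ n⟫‖ ^ 2) ∘
        fun n : ℕ => if n = 0 then 0 else if n = 1 then 2 else n + 1)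
        = fun n : ℕ => ‖⟪f, E n⟫‖ ^ 2 := by
      funext n
      rcases Nat.lt_or_ge n 2 with h | h
      · interval_cases n <;> simp [Ψ₁]
      · have h0 : n ≠ 0 := by omega
        have h1 : n ≠ 1 := by omega
        have h2 : n + 1 ≠ 0 := by omega
        have h3 : n + 1 ≠ 1 := by omega
        have h4 : n + 1 ≠ 2 := by omega
        simp only [Function.comp_apply, if_neg h0, if_neg h1, Ψ₁, if_neg h2, if_neg h3,
          if_neg h4, Nat.add_sub_cancel]
    rw [this]
    exact E_hasSum f
  · intro x hx
    have hx2 : x = 1 := by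
      by_contra h
      apply hx
      rcases x with _ | _ | _ | x
      · exact ⟨0, by simp⟩
      · exact absurd rfl h
      · exact ⟨1, by simp⟩
      · exact ⟨x + 2, by simp⟩
    subst hx2
    simp [Ψ₁]

set_option maxHeartbeats 1000000 in
theorem stmt13 (K : H2 →L[ℂ] H2)
    -- K is the orthogonal projection of H2 onto S
    (hK₁ : ∀ f : H2, K f ∈ S) (hK₂ : ∀ f : H2, f - K f ∈ Sᗮ) :
    (∃ A B : ℝ, IsKFrameWith K Φ₁ A B) ∧
    (∃ A B : ℝ, IsKFrameWith K Ψ₁ A B) ∧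
    (∑' j : σ₀, ‖⟪E 1, Φ₁ (j : ℕ)⟫‖ ^ 2 + ∑' j : ↥σ₀ᶜ, ‖⟪E 1, Ψ₁ (j : ℕ)⟫‖ ^ 2 = 0) ∧
    ‖ContinuousLinearMap.adjoint K (E 1)‖ ^ 2 = 1 ∧
    -- the weaving along σ₀ is not a K-frame
    ¬ ∃ A B : ℝ, 0 < A ∧ 0 < B ∧ ∀ f : H2,
        Summable (fun j : σ₀ => ‖⟪f, Φ₁ (j : ℕ)⟫‖ ^ 2) ∧
        Summable (fun j : ↥σ₀ᶜ => ‖⟪f, Ψ₁ (j : ℕ)⟫‖ ^ 2) ∧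
        A * ‖ContinuousLinearMap.adjoint K f‖ ^ 2 ≤
          ∑' j : σ₀, ‖⟪f, Φ₁ (j : ℕ)⟫‖ ^ 2 + ∑' j : ↥σ₀ᶜ, ‖⟪f, Ψ₁ (j : ℕ)⟫‖ ^ 2 ∧
        ∑' j : σ₀, ‖⟪f, Φ₁ (j : ℕ)⟫‖ ^ 2 + ∑' j : ↥σ₀ᶜ, ‖⟪f, Ψ₁ (j : ℕ)⟫‖ ^ 2 ≤
          B * ‖f‖ ^ 2 := by
  -- K is self-adjoint and fixes E 1
  have hSperp : ∀ f : H2, ∀ u ∈ S, ⟪u, f - K f⟫ = 0 := fun f u hu =>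
    Submodule.inner_right_of_mem_orthogonal hu (hK₂ f)
  have hadj : ContinuousLinearMap.adjoint K = K := by
    symm
    rw [ContinuousLinearMap.eq_adjoint_iff]
    intro x y
    have h1 : ⟪K x, y⟫ = ⟪K x, K y⟫ := by
      have := hSperp y (K x) (hK₁ x)
      rw [inner_sub_right] at this
      linear_combination this
    have h2 : ⟪x, K y⟫ = ⟪K x, K y⟫ := by
      have hh := congrArg (starRingEnd ℂ) (hSperp x (K y) (hK₁ y))
      rw [map_zero, inner_conj_symm, inner_sub_left] at hh
      linear_combination hh
    rw [h1, h2]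
  have hKnorm : ∀ f : H2, ‖K f‖ ≤ ‖f‖ := by
    intro f
    rcases eq_or_ne (K f) 0 with h | h
    · simp [h]
    have hinner : ⟪K f, f⟫ = ⟪K f, K f⟫ := by
      have := hSperp f (K f) (hK₁ f)
      rw [inner_sub_right] at this
      linear_combination this
    have h1 : ‖K f‖ ^ 2 = ‖⟪K f, f⟫‖ := by
      rw [hinner, inner_self_eq_norm_sq_to_K]
      simp [sq_abs, norm_pow]
    have h2 : ‖⟪K f, f⟫‖ ≤ ‖K f‖ * ‖f‖ := norm_inner_le_norm _ _
    have hpos : 0 < ‖K f‖ := norm_pos_iff.mpr h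
    nlinarith [norm_nonneg f]
  have hKE1 : K (E 1) = E 1 := by
    have hE1S : E 1 ∈ S :=
      Submodule.le_topologicalClosure _ (Submodule.subset_span ⟨0, rfl⟩)
    have hmemS : E 1 - K (E 1) ∈ S := Submodule.sub_mem _ hE1S (hK₁ _)
    have h0 : ⟪E 1 - K (E 1), E 1 - K (E 1)⟫ = 0 :=
      Submodule.inner_right_of_mem_orthogonal hmemS (hK₂ (E 1))
    have := inner_self_eq_zero.mp h0
    rw [sub_eq_zero] at this
    exact this.symm
  have hE1sq : ‖E 1‖ ^ 2 = 1 := by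
    refine (E_hasSum (E 1)).unique ?_
    have he : (fun n : ℕ => ‖⟪E 1, E n⟫‖ ^ 2) = fun n : ℕ => if n = 1 then (1:ℝ) else 0 := by
      funext n
      rcases eq_or_ne n 1 with h | h
      · subst h; rw [inner_E, E_apply]; simp
      · rw [inner_E_E (Ne.symm h)]; simp [h]
    rw [he]
    exact hasSum_ite_eq 1 1
  have hadjE1 : ‖ContinuousLinearMap.adjoint K (E 1)‖ ^ 2 = 1 := by
    rw [hadj, hKE1]; exact hE1sq
  -- the two zero weaving sums
  have hsum1 : ∑' j : σ₀, ‖⟪E 1, Φ₁ (j : ℕ)⟫‖ ^ 2 = 0 := by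
    have hz : (fun j : σ₀ => ‖⟪E 1, Φ₁ (j : ℕ)⟫‖ ^ 2) = fun _ => 0 := by
      funext j
      obtain ⟨j, hj⟩ := j
      have hj' : j ≠ 1 := hj
      have this : ⟪E 1, Φ₁ j⟫ = 0 := by
        rcases j with _ | _ | _ | j
        · simpa [Φ₁] using inner_E_E (m := 1) (n := 0) (by omega)
        · exact absurd rfl hj'
        · simp [Φ₁]
        · have h2 : j + 3 ≠ 0 := by omega
          have h3 : j + 3 ≠ 1 := by omega
          have h4 : j + 3 ≠ 2 := by omega
          simp only [Φ₁, if_neg h2, if_neg h3, if_neg h4]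
          exact inner_E_E (by omega)
      simp [this]
    rw [hz, tsum_zero]
  have hsum2 : ∑' j : ↥σ₀ᶜ, ‖⟪E 1, Ψ₁ (j : ℕ)⟫‖ ^ 2 = 0 := by
    have hz : (fun j : ↥σ₀ᶜ => ‖⟪E 1, Ψ₁ (j : ℕ)⟫‖ ^ 2) = fun _ => 0 := by
      funext j
      obtain ⟨j, hj⟩ := j
      have hj' : j = 1 := by
        simpa [σ₀, Set.mem_compl_iff] using hj
      subst hj'
      simp [Ψ₁]
    rw [hz, tsum_zero]
  refine ⟨⟨1, 1, one_pos, one_pos, fun f => ?_⟩, ⟨1, 1, one_pos, one_pos, fun f => ?_⟩,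
      by rw [hsum1, hsum2, add_zero], hadjE1, ?_⟩
  · refine ⟨(Phi_hasSum f).summable, ?_, ?_⟩
    · rw [(Phi_hasSum f).tsum_eq, hadj, one_mul]
      have := hKnorm f
      nlinarith [norm_nonneg (K f), norm_nonneg f]
    · rw [(Phi_hasSum f).tsum_eq, one_mul]
  · refine ⟨(Psi_hasSum f).summable, ?_, ?_⟩
    · rw [(Psi_hasSum f).tsum_eq, hadj, one_mul]
      have := hKnorm f
      nlinarith [norm_nonneg (K f), norm_nonneg f]
    · rw [(Psi_hasSum f).tsum_eq, one_mul]
  · rintro ⟨A, B, hA, hB, h⟩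
    obtain ⟨-, -, hlow, -⟩ := h (E 1)
    rw [hsum1, hsum2, add_zero, hadjE1, mul_one] at hlow
    linarith
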